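/- In the free algebra ℚ⟨a,b⟩, for every m ≥ 1 the element Z_m(a,b) := Σ_{j=1}^{m−1} ((−1)^j/j) [ Σ_{𝒜 ⊆ {1,...,j}, j+|𝒜| < m} y_{𝒜,j}(a,b) − a^j − b^j ] is a sum of commutators, i.e., lies in the commutator subspace of ℚ⟨a,b⟩. -/

import Mathlib

namespace ZmAux

/-- positions of (linear) occurrences of "true,false" in a word -/
def occ (w : List Bool) : Finset ℕ :=
  (Finset.range (w.length - 1)).filter (fun i => w[i]? = some true ∧ w[i+1]? = some false)

def chi (w : List Bool) : ℕ :=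
  if w.getLast? = some true ∧ w.head? = some false then 1 else 0

def cyc (w : List Bool) : ℕ := (occ w).card + chi w

def cnt : ℕ → List Bool → ℕ
  | 0, w => if w = [] then 1 else 0
  | _+1, [] => 0
  | j+1, (x :: t) => (if x = true ∧ t.head? = some false then cnt j t.tail else 0) + cnt j t

lemma mem_occ {w : List Bool} {i : ℕ} :
    i ∈ occ w ↔ i + 1 < w.length ∧ w[i]? = some true ∧ w[i+1]? = some false := by
  simp only [occ, Finset.mem_filter, Finset.mem_range]
  constructor
  · rintro ⟨h, h2⟩; exact ⟨by omega, h2⟩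
  · rintro ⟨h, h2⟩; exact ⟨by omega, h2⟩

lemma occ_card_lt {w : List Bool} (hw : w ≠ []) : (occ w).card < w.length := by
  have h1 : (occ w).card ≤ (Finset.range (w.length - 1)).card := Finset.card_le_card (Finset.filter_subset _ _)
  have h2 : 0 < w.length := List.length_pos_iff.2 hw
  simp only [Finset.card_range] at h1
  omega

lemma occ_cons_card (x : Bool) (t : List Bool) :
    (occ (x :: t)).card = (if x = true ∧ t.head? = some false then 1 else 0) + (occ t).card := by
  have h : occ (x :: t) =
      (if x = true ∧ t.head? = some false then ({0} : Finset ℕ) else ∅) ∪ (occ t).image (· + 1) := by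
    ext i
    cases i with
    | zero =>
      simp only [mem_occ, List.getElem?_cons_zero, List.getElem?_cons_succ, Finset.mem_union,
        Finset.mem_image, List.length_cons]
      constructor
      · rintro ⟨h1, h2, h3⟩
        left
        have hx : x = true := by simpa using h2
        have : t.head? = some false := by rw [List.head?_eq_getElem?]; exact h3
        simp [hx, this]
      · intro h
        rcases h with h | ⟨a, _, ha⟩
        · by_cases hc : x = true ∧ t.head? = some false
          · obtain ⟨hx, ht⟩ := hc
            have h3 : t[0]? = some false := by rw [← List.head?_eq_getElem?]; exact ht
            have ht' : t ≠ [] := by intro h'; simp [h'] at h3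
            have : 0 < t.length := List.length_pos_iff.2 ht'
            exact ⟨by omega, by simp [hx], h3⟩
          · simp [hc] at h
        · omega
    | succ i =>
      simp only [mem_occ, List.getElem?_cons_succ, Finset.mem_union, Finset.mem_image,
        List.length_cons]
      constructor
      · rintro ⟨h1, h2, h3⟩
        right
        exact ⟨i, ⟨by omega, h2, h3⟩, rfl⟩
      · intro h
        rcases h with h | ⟨a, ha, ha2⟩
        · exfalso; by_cases hc : x = true ∧ t.head? = some false <;> simp [hc] at h
        · obtain ⟨h1, h2, h3⟩ := ha
          have : a = i := by omega
          subst this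
          exact ⟨by omega, h2, h3⟩
  rw [h, Finset.card_union_of_disjoint, Finset.card_image_of_injective _ (add_left_injective 1)]
  · congr 1; split <;> simp
  · rw [Finset.disjoint_left]
    intro i hi hi2
    simp only [Finset.mem_image] at hi2
    obtain ⟨a, _, ha⟩ := hi2
    by_cases hc : x = true ∧ t.head? = some false <;> simp [hc] at hi <;> omega

end ZmAux

namespace ZmAux

lemma occ_concat_card (t : List Bool) (x : Bool) :
    (occ (t ++ [x])).card = (occ t).card + (if t.getLast? = some true ∧ x = false then 1 else 0) := by
  rcases eq_or_ne t [] with rfl | ht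
  · simp [occ, chi]
  · have hl : 0 < t.length := List.length_pos_iff.2 ht
    have h : occ (t ++ [x]) = occ t ∪ (if t.getLast? = some true ∧ x = false then {t.length - 1} else ∅) := by
      ext i
      simp only [mem_occ, Finset.mem_union, List.length_append, List.length_singleton]
      constructor
      · rintro ⟨h1, h2, h3⟩
        by_cases hi : i + 1 < t.length
        · left
          rw [List.getElem?_append_left (by omega)] at h2
          rw [List.getElem?_append_left hi] at h3
          exact ⟨hi, h2, h3⟩
        · right
          have hieq : i = t.length - 1 := by omega
          have h2' : t.getLast? = some true := by
            rw [List.getLast?_eq_getElem?, ← List.getElem?_append_left (l₂ := [x]) (by omega), ← hieq]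
            exact h2
          have h3' : x = false := by
            have : i + 1 = t.length := by omega
            rw [this, List.getElem?_concat_length] at h3
            simpa using h3
          simp [h2', h3', hieq]
      · intro h
        rcases h with ⟨h1, h2, h3⟩ | h
        · exact ⟨by omega, by rw [List.getElem?_append_left (by omega)]; exact h2,
            by rw [List.getElem?_append_left (by omega)]; exact h3⟩
        · by_cases hc : t.getLast? = some true ∧ x = false
          · rw [if_pos hc, Finset.mem_singleton] at h
            subst h
            refine ⟨by omega, ?_, ?_⟩
            · rw [List.getElem?_append_left (by omega), ← List.getLast?_eq_getElem?]
              exact hc.1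
            · have : t.length - 1 + 1 = t.length := by omega
              rw [this, List.getElem?_concat_length, hc.2]
          · simp [hc] at h
    rw [h, Finset.card_union_of_disjoint]
    · congr 1; split <;> simp
    · rw [Finset.disjoint_right]
      intro i hi hi2
      by_cases hc : t.getLast? = some true ∧ x = false
      · rw [if_pos hc, Finset.mem_singleton] at hi
        subst hi
        have := mem_occ.1 hi2
        omega
      · simp [hc] at hi

lemma head?_cases (t : List Bool) : t.head? = none ∨ t.head? = some true ∨ t.head? = some false := by
  cases t with
  | nil => simp
  | cons y t' => rcases y with _|_ <;> simp

lemma cyc_rotate_one (w : List Bool) : cyc (w.rotate 1) = cyc w := by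
  cases w with
  | nil => simp
  | cons x t =>
    have hrot : (x :: t).rotate 1 = t ++ [x] := by
      simpa using List.rotate_cons_succ t x 0
    rw [hrot]
    rcases eq_or_ne t [] with rfl | ht
    · simp [cyc]
    · have hl : 0 < t.length := List.length_pos_iff.2 ht
      unfold cyc chi
      rw [occ_concat_card, occ_cons_card, List.getLast?_concat]
      have hhead : (t ++ [x]).head? = t.head? := by
        rw [List.head?_append]
        cases h : t.head? with
        | none => exfalso; exact ht (List.head?_eq_none_iff.1 h)
        | some y => rfl
      have hlast : (x :: t).getLast? = t.getLast? := by
        cases t with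
        | nil => exact absurd rfl ht
        | cons y t' => exact List.getLast?_cons_cons
      rw [hhead, hlast]
      simp only [List.head?_cons, Option.some.injEq]
      split_ifs <;> simp_all <;> omega

lemma cyc_rotate (w : List Bool) (r : ℕ) : cyc (w.rotate r) = cyc w := by
  induction r with
  | zero => simp
  | succ r ih =>
    have : w.rotate (r + 1) = (w.rotate r).rotate 1 := by rw [List.rotate_rotate]
    rw [this, cyc_rotate_one, ih]

lemma getElem?_rotate (w : List Bool) (r i : ℕ) (h : i < w.length) :
    (w.rotate r)[i]? = w[(i + r) % w.length]? := by
  have h0 : 0 < w.length := by omega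
  have h1 : i < (w.rotate r).length := by simpa using h
  have h2 : (i + r) % w.length < w.length := Nat.mod_lt _ h0
  rw [List.getElem?_eq_getElem h1, List.getElem?_eq_getElem h2]
  simp [List.getElem_rotate]

end ZmAux

namespace ZmAux

lemma occ_nil : occ ([] : List Bool) = ∅ := by simp [occ]

lemma cnt_eq_choose (j : ℕ) (w : List Bool) :
    cnt j w = if j ≤ w.length then (occ w).card.choose (w.length - j) else 0 := by
  induction j generalizing w with
  | zero =>
    cases w with
    | nil => simp [cnt, occ_nil]
    | cons x t =>
      have h := occ_card_lt (w := x :: t) (by simp)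
      simp only [cnt, if_neg (List.cons_ne_nil x t), Nat.zero_le, if_true, Nat.sub_zero]
      exact (Nat.choose_eq_zero_of_lt h).symm
  | succ j ih =>
    cases w with
    | nil => simp [cnt]
    | cons x t =>
      show (if x = true ∧ t.head? = some false then cnt j t.tail else 0) + cnt j t = _
      by_cases hc : x = true ∧ t.head? = some false
      · obtain ⟨hx, hth⟩ := hc
        cases t with
        | nil => simp at hth
        | cons y t' =>
          have hy : y = false := by simpa using hth
          subst hy hx
          obtain ⟨p, hp⟩ : ∃ p, (occ t').card = p := ⟨_, rfl⟩
          have hcard : (occ (false :: t')).card = p := by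
            rw [occ_cons_card, hp]; simp
          have hcard2 : (occ (true :: false :: t')).card = p + 1 := by
            rw [occ_cons_card, hcard]; simp; omega
          rw [if_pos ⟨rfl, rfl⟩, List.tail_cons, ih, ih, hcard, hcard2, hp]
          simp only [List.length_cons]
          rcases Nat.lt_trichotomy j (t'.length + 1) with hj | hj | hj
          · have hj' : j ≤ t'.length := by omega
            rw [if_pos hj', if_pos (by omega), if_pos (by omega)]
            have e1 : t'.length + 1 + 1 - (j + 1) = (t'.length - j) + 1 := by omega
            have e2 : t'.length + 1 - j = (t'.length - j) + 1 := by omega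
            rw [e1, e2]
            have hpas := Nat.choose_succ_succ p (t'.length - j)
            simp only [Nat.succ_eq_add_one] at hpas
            omega
          · rw [if_neg (by omega), if_pos (by omega), if_pos (by omega)]
            have e1 : t'.length + 1 - j = 0 := by omega
            have e2 : t'.length + 1 + 1 - (j + 1) = 0 := by omega
            rw [e1, e2]
            simp
          · rw [if_neg (by omega), if_neg (by omega), if_neg (by omega)]
      · rw [if_neg hc, ih]
        rw [occ_cons_card, if_neg hc]
        simp only [List.length_cons, zero_add]
        by_cases hj : j ≤ t.length
        · rw [if_pos hj, if_pos (by omega)]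
          congr 1
          omega
        · rw [if_neg hj, if_neg (by omega)]

lemma head?_rotate {w : List Bool} {r : ℕ} (h : r < w.length) :
    (w.rotate r).head? = w[r]? := by
  rw [List.head?_eq_getElem?, getElem?_rotate _ _ _ (by omega)]
  congr 1
  simp [Nat.mod_eq_of_lt h]

lemma getLast?_rotate {w : List Bool} {r : ℕ} (h1 : 1 ≤ r) (h2 : r < w.length) :
    (w.rotate r).getLast? = w[r - 1]? := by
  rw [List.getLast?_eq_getElem?, List.length_rotate,
    getElem?_rotate _ _ _ (by omega)]
  congr 1
  have e : w.length - 1 + r = (r - 1) + w.length := by omega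
  rw [e, Nat.add_mod_right, Nat.mod_eq_of_lt (by omega)]

lemma chi_rotate_count {w : List Bool} (hw : w ≠ []) :
    ((Finset.range w.length).filter (fun r => chi (w.rotate r) = 1)).card = cyc w := by
  have hl : 0 < w.length := List.length_pos_iff.2 hw
  have hsplit : Finset.range w.length = insert 0 (Finset.Ico 1 w.length) := by
    ext i; simp [Finset.mem_Ico]; omega
  rw [hsplit, Finset.filter_insert]
  have hIco : ((Finset.Ico 1 w.length).filter (fun r => chi (w.rotate r) = 1)).card = (occ w).card := by
    apply Finset.card_nbij' (fun r => r - 1) (fun i => i + 1)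
    · intro r hr
      simp only [Finset.mem_coe, Finset.mem_filter, Finset.mem_Ico] at hr
      obtain ⟨⟨hr1, hr2⟩, hchi⟩ := hr
      unfold chi at hchi
      by_cases hcond : (w.rotate r).getLast? = some true ∧ (w.rotate r).head? = some false
      · obtain ⟨hlast, hhead⟩ := hcond
        rw [getLast?_rotate hr1 hr2] at hlast
        rw [head?_rotate hr2] at hhead
        beta_reduce
        refine mem_occ.2 ⟨by omega, hlast, ?_⟩
        have : r - 1 + 1 = r := by omega
        rw [this]; exact hhead
      · rw [if_neg hcond] at hchi; exact absurd hchi (by simp)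
    · intro i hi
      obtain ⟨hi1, hi2, hi3⟩ := mem_occ.1 hi
      simp only [Finset.mem_coe, Finset.mem_filter, Finset.mem_Ico]
      refine ⟨⟨by omega, by omega⟩, ?_⟩
      unfold chi
      rw [if_pos ⟨by rw [getLast?_rotate (by omega) (by omega)]; simpa using hi2,
        by rw [head?_rotate (by omega)]; exact hi3⟩]
    · intro r hr
      simp only [Finset.mem_coe, Finset.mem_filter, Finset.mem_Ico] at hr
      beta_reduce; omega
    · intro i _; beta_reduce; omega
  have h0 : w.rotate 0 = w := by simp
  have hchi01 : chi w = 0 ∨ chi w = 1 := by unfold chi; split_ifs <;> simp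
  by_cases hchi : chi w = 1
  · rw [if_pos (by rw [h0]; exact hchi), Finset.card_insert_of_notMem (by simp), hIco]
    unfold cyc; omega
  · rw [if_neg (by rw [h0]; exact hchi), hIco]
    unfold cyc
    omega

end ZmAux

namespace ZmAux

lemma chi01 (w : List Bool) : chi w = 0 ∨ chi w = 1 := by
  unfold chi; split_ifs <;> simp

lemma occ_replicate (n : ℕ) (x : Bool) : occ (List.replicate n x) = ∅ := by
  ext i
  simp only [mem_occ, Finset.notMem_empty, iff_false, not_and, List.length_replicate,
    List.getElem?_replicate]
  intro h0 h1
  cases x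
  · split_ifs at h1 <;> simp_all
  · split_ifs <;> simp

lemma chi_replicate (n : ℕ) (x : Bool) : chi (List.replicate n x) = 0 := by
  unfold chi
  rw [List.getLast?_eq_getElem?, List.head?_eq_getElem?]
  simp only [List.length_replicate, List.getElem?_replicate]
  cases x <;> split_ifs <;> simp_all

lemma cyc_replicate (n : ℕ) (x : Bool) : cyc (List.replicate n x) = 0 := by
  unfold cyc
  rw [chi_replicate, occ_replicate]
  simp

lemma cyc_lt {w : List Bool} (hw : w ≠ []) : cyc w < w.length := by
  have hn : 0 < w.length := List.length_pos_iff.2 hw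
  have hocc := occ_card_lt hw
  rcases chi01 w with h | h
  · unfold cyc; omega
  · have hc : w.getLast? = some true ∧ w.head? = some false := by
      by_contra hcon
      unfold chi at h; rw [if_neg hcon] at h; simp at h
    obtain ⟨hlast, hhead⟩ := hc
    rw [List.head?_eq_getElem?] at hhead
    have hn2 : 2 ≤ w.length := by
      by_contra hcon
      have h1 : w.length = 1 := by omega
      rw [List.getLast?_eq_getElem?, h1] at hlast
      simp only [Nat.sub_self] at hlast
      rw [hlast] at hhead
      simp at hhead
    have hsub : occ w ⊆ Finset.Ico 1 (w.length - 1) := by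
      intro i hi
      obtain ⟨h1, h2, h3⟩ := mem_occ.1 hi
      simp only [Finset.mem_Ico]
      constructor
      · rcases Nat.eq_zero_or_pos i with rfl | hi0
        · rw [hhead] at h2; simp at h2
        · omega
      · omega
    have h9 := Finset.card_le_card hsub
    rw [Nat.card_Ico] at h9
    unfold cyc
    omega

lemma cyc_eq_zero_imp {w : List Bool} (hw : w ≠ []) (h : cyc w = 0) :
    w = List.replicate w.length true ∨ w = List.replicate w.length false := by
  have hn : 0 < w.length := List.length_pos_iff.2 hw
  have hocc : occ w = ∅ := Finset.card_eq_zero.1 (by unfold cyc at h; omega)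
  have hchi : chi w = 0 := by unfold cyc at h; omega
  have hchi' : ¬(w.getLast? = some true ∧ w.head? = some false) := by
    intro hc; unfold chi at hchi; rw [if_pos hc] at hchi; simp at hchi
  have hsome : ∀ i, i < w.length → ∃ b, w[i]? = some b := by
    intro i hi
    exact ⟨w[i], List.getElem?_eq_getElem hi⟩
  have step : ∀ i, i < w.length → w[i]? = some true → w[(i+1) % w.length]? = some true := by
    intro i hi hT
    by_cases h2 : i + 1 < w.length
    · rw [Nat.mod_eq_of_lt h2]
      obtain ⟨b, hb⟩ := hsome (i+1) h2
      cases b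
      · exact absurd (mem_occ.2 ⟨h2, hT, hb⟩) (by simp [hocc])
      · exact hb
    · have hieq : i + 1 = w.length := by omega
      rw [hieq, Nat.mod_self]
      obtain ⟨b, hb⟩ := hsome 0 hn
      cases b
      · exfalso
        apply hchi'
        constructor
        · rw [List.getLast?_eq_getElem?]
          have : w.length - 1 = i := by omega
          rw [this]; exact hT
        · rw [List.head?_eq_getElem?]; exact hb
      · rw [List.head?_eq_getElem?] at *; exact hb
  have claim : ∀ i, i < w.length → w[i]? = some true → ∀ d, w[(i + d) % w.length]? = some true := by
    intro i hi hT d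
    induction d with
    | zero => simpa [Nat.mod_eq_of_lt hi] using hT
    | succ d ih =>
      have hlt : (i + d) % w.length < w.length := Nat.mod_lt _ hn
      have := step _ hlt ih
      rwa [Nat.mod_add_mod] at this
  by_cases hT : w = List.replicate w.length true
  · left; exact hT
  · right
    rw [List.eq_replicate_iff] at hT ⊢
    refine ⟨rfl, ?_⟩
    by_contra hF
    push_neg at hF
    obtain ⟨bT, hbT, hbT2⟩ := hF
    have hbT3 : bT = true := by cases bT <;> simp_all
    subst hbT3
    obtain ⟨iT, hiT⟩ := List.mem_iff_getElem?.1 hbT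
    have hiTlt : iT < w.length := by
      by_contra hcon
      rw [List.getElem?_eq_none (by omega)] at hiT
      simp at hiT
    push_neg at hT
    obtain ⟨bF, hbF, hbF2⟩ := hT rfl
    have hbF3 : bF = false := by cases bF <;> simp_all
    subst hbF3
    obtain ⟨iF, hiF⟩ := List.mem_iff_getElem?.1 hbF
    have hiFlt : iF < w.length := by
      by_contra hcon
      rw [List.getElem?_eq_none (by omega)] at hiF
      simp at hiF
    have := claim iT hiTlt hiT (w.length + iF - iT)
    have heq : (iT + (w.length + iF - iT)) % w.length = iF := by
      have : iT + (w.length + iF - iT) = iF + w.length := by omega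
      rw [this, Nat.add_mod_right, Nat.mod_eq_of_lt hiFlt]
    rw [heq, hiF] at this
    simp at this

lemma bid (O n s : ℕ) (h : O ≤ n) :
    O * Nat.choose (O - 1) s + (n - O) * Nat.choose O s = (n - s) * Nat.choose O s := by
  cases O with
  | zero =>
    cases s with
    | zero => simp
    | succ s => simp [Nat.choose_eq_zero_of_lt (by omega : 0 < s + 1)]
  | succ O' =>
    by_cases hs : s ≤ O' + 1
    · have h1 : (O' + 1) * Nat.choose O' s = (O' + 1 - s) * Nat.choose (O' + 1) s := by
        have e1 := Nat.add_one_mul_choose_eq O' s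
        have e2 := Nat.choose_succ_right_eq (O' + 1) s
        rw [e1, e2, mul_comm]
      have e : (O' + 1 - s) + (n - (O' + 1)) = n - s := by omega
      rw [Nat.succ_sub_one, h1, ← add_mul, e]
    · rw [Nat.choose_eq_zero_of_lt (by omega), Nat.choose_eq_zero_of_lt (by omega)]
      simp

lemma sum_choose_rotate {w : List Bool} (hw : w ≠ []) (s : ℕ) :
    ∑ r ∈ Finset.range w.length, ((occ (w.rotate r)).card.choose s)
      = (w.length - s) * (cyc w).choose s := by
  have hn : 0 < w.length := List.length_pos_iff.2 hw
  have hval : ∀ r, (occ (w.rotate r)).card = cyc w - chi (w.rotate r) := by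
    intro r
    have h1 : cyc (w.rotate r) = cyc w := cyc_rotate w r
    unfold cyc at h1 ⊢
    omega
  rw [← Finset.sum_filter_add_sum_filter_not (Finset.range w.length)
    (fun r => chi (w.rotate r) = 1)]
  have hcard1 : ((Finset.range w.length).filter (fun r => chi (w.rotate r) = 1)).card = cyc w :=
    chi_rotate_count hw
  have h1 : ∑ r ∈ (Finset.range w.length).filter (fun r => chi (w.rotate r) = 1),
      ((occ (w.rotate r)).card.choose s) = cyc w * Nat.choose (cyc w - 1) s := by
    rw [Finset.sum_congr rfl (fun r hr => ?_), Finset.sum_const, hcard1, smul_eq_mul]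
    simp only [Finset.mem_filter] at hr
    rw [hval r, hr.2]
  have h2 : ∑ r ∈ (Finset.range w.length).filter (fun r => ¬(chi (w.rotate r) = 1)),
      ((occ (w.rotate r)).card.choose s) = (w.length - cyc w) * Nat.choose (cyc w) s := by
    rw [Finset.sum_congr rfl (fun r hr => ?_), Finset.sum_const, Finset.filter_not,
      Finset.card_sdiff_of_subset (Finset.filter_subset _ _), hcard1, Finset.card_range, smul_eq_mul]
    simp only [Finset.mem_filter] at hr
    have := chi01 (w.rotate r)
    have hz : chi (w.rotate r) = 0 := by tauto
    rw [hval r, hz, Nat.sub_zero]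
  rw [h1, h2]
  exact bid (cyc w) w.length s (by have := cyc_lt hw; omega)

end ZmAux

namespace ZmAux

lemma alt_sum (O n : ℕ) (h : O < n) :
    ∑ s ∈ Finset.range n, (-1:ℚ)^(n - s) * (Nat.choose O s : ℚ)
      = (-1:ℚ)^n * (if O = 0 then 1 else 0) := by
  have key : ∀ s ∈ Finset.range n, (-1:ℚ)^(n-s) * (Nat.choose O s : ℚ)
      = (-1:ℚ)^n * ((-1:ℚ)^s * (Nat.choose O s : ℚ)) := by
    intro s hs
    simp only [Finset.mem_range] at hs
    have h1 : (-1:ℚ)^(n-s) * (-1:ℚ)^s = (-1:ℚ)^n := by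
      rw [← pow_add]; congr 1; omega
    have h2 : (-1:ℚ)^s * (-1:ℚ)^s = 1 := by
      rw [← pow_add, ← two_mul, pow_mul]; norm_num
    rw [← h1, mul_assoc, ← mul_assoc ((-1:ℚ)^s), h2, one_mul]
  rw [Finset.sum_congr rfl key, ← Finset.mul_sum]
  congr 1
  have hsub : Finset.range (O+1) ⊆ Finset.range n := Finset.range_subset_range.2 (by omega)
  rw [← Finset.sum_subset hsub (fun s hs hns => ?_)]
  · have hint := Int.alternating_sum_range_choose (n := O)
    have hq := congrArg (fun z : ℤ => (z : ℚ)) hint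
    push_cast at hq
    rw [hq]
  · simp only [Finset.mem_range] at hs hns
    rw [Nat.choose_eq_zero_of_lt (by omega)]
    simp

lemma rep_ne : ∀ {n : ℕ}, 0 < n →
    List.replicate n true ≠ List.replicate n false := by
  intro n hn hcon
  have := congrArg List.head? hcon
  cases n with
  | zero => omega
  | succ k => simp [List.replicate_succ] at this

lemma star {w : List Bool} (hw : w ≠ []) {M : ℕ} (hM : w.length ≤ M) :
    ∑ r ∈ Finset.range w.length, ∑ j ∈ Finset.Icc 1 M,
        ((-1:ℚ)^j / (j:ℚ)) * (cnt j (w.rotate r) : ℚ)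
      = (-1:ℚ)^(w.length) * ((if w = List.replicate w.length true then (1:ℚ) else 0) +
          (if w = List.replicate w.length false then (1:ℚ) else 0)) := by
  have hn : 0 < w.length := List.length_pos_iff.2 hw
  have hO : cyc w < w.length := cyc_lt hw
  rw [Finset.sum_comm]
  have hinner : ∀ j ∈ Finset.Icc 1 M,
      ∑ r ∈ Finset.range w.length, ((-1:ℚ)^j / (j:ℚ)) * (cnt j (w.rotate r) : ℚ)
        = if j ≤ w.length then (-1:ℚ)^j * ((cyc w).choose (w.length - j) : ℚ) else 0 := by
    intro j hj
    simp only [Finset.mem_Icc] at hj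
    rw [← Finset.mul_sum]
    have hsum : ∑ r ∈ Finset.range w.length, (cnt j (w.rotate r) : ℚ)
        = ((∑ r ∈ Finset.range w.length, cnt j (w.rotate r) : ℕ) : ℚ) := by push_cast; ring
    rw [hsum]
    have hsum2 : (∑ r ∈ Finset.range w.length, cnt j (w.rotate r))
        = if j ≤ w.length then j * ((cyc w).choose (w.length - j)) else 0 := by
      have hc : ∀ r, cnt j (w.rotate r)
          = if j ≤ w.length then (occ (w.rotate r)).card.choose (w.length - j) else 0 := by
        intro r
        rw [cnt_eq_choose]
        simp [List.length_rotate]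
      rw [Finset.sum_congr rfl (fun r _ => hc r)]
      by_cases hjn : j ≤ w.length
      · simp only [if_pos hjn]
        rw [sum_choose_rotate hw (w.length - j)]
        congr 1
        omega
      · simp [hjn]
    rw [hsum2]
    by_cases hjn : j ≤ w.length
    · rw [if_pos hjn, if_pos hjn]
      have hj0 : (j : ℚ) ≠ 0 := by
        simp only [ne_eq, Nat.cast_eq_zero]; omega
      push_cast
      field_simp
    · simp [hjn]
  rw [Finset.sum_congr rfl hinner]
  have hIccsub : Finset.Icc 1 w.length ⊆ Finset.Icc 1 M := Finset.Icc_subset_Icc_right hM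
  rw [← Finset.sum_subset hIccsub (fun j hj hnj => ?_)]
  swap
  · simp only [Finset.mem_Icc] at hj hnj
    rw [if_neg (by omega)]
  have hdrop : ∀ j ∈ Finset.Icc 1 w.length,
      (if j ≤ w.length then (-1:ℚ)^j * ((cyc w).choose (w.length - j) : ℚ) else 0)
        = (-1:ℚ)^j * ((cyc w).choose (w.length - j) : ℚ) := by
    intro j hj
    simp only [Finset.mem_Icc] at hj
    rw [if_pos hj.2]
  rw [Finset.sum_congr rfl hdrop]
  have hreindex : ∑ j ∈ Finset.Icc 1 w.length, (-1:ℚ)^j * ((cyc w).choose (w.length - j) : ℚ)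
      = ∑ s ∈ Finset.range w.length, (-1:ℚ)^(w.length - s) * ((cyc w).choose s : ℚ) := by
    apply Finset.sum_nbij' (fun j => w.length - j) (fun s => w.length - s)
    · intro j hj
      simp only [Finset.mem_Icc] at hj
      simp only [Finset.mem_range]
      omega
    · intro s hs
      simp only [Finset.mem_range] at hs
      simp only [Finset.mem_Icc]
      omega
    · intro j hj
      simp only [Finset.mem_Icc] at hj
      omega
    · intro s hs
      simp only [Finset.mem_range] at hs
      omega
    · intro j hj
      simp only [Finset.mem_Icc] at hj
      have e : w.length - (w.length - j) = j := by omega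
      rw [e]
  rw [hreindex, alt_sum _ _ hO]
  congr 1
  by_cases hO0 : cyc w = 0
  · rcases cyc_eq_zero_imp hw hO0 with hrep | hrep
    · rw [if_pos hO0, if_pos hrep, if_neg (fun hcon => rep_ne hn (hrep.symm.trans hcon))]
      norm_num
    · rw [if_pos hO0, if_pos hrep, if_neg (fun hcon => (rep_ne hn).symm (hrep.symm.trans hcon))]
      norm_num
  · rw [if_neg hO0, if_neg, if_neg]
    · norm_num
    · intro hcon
      rw [hcon, cyc_replicate] at hO0
      simp at hO0
    · intro hcon
      rw [hcon, cyc_replicate] at hO0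
      simp at hO0

end ZmAux

namespace ZmAux

def wrd (l : List Bool) : FreeAlgebra ℚ Bool := (l.map (FreeAlgebra.ι ℚ)).prod

lemma wrd_nil : wrd [] = 1 := rfl

lemma wrd_cons (x : Bool) (t : List Bool) : wrd (x :: t) = FreeAlgebra.ι ℚ x * wrd t := by
  simp [wrd]

lemma wrd_append (l₁ l₂ : List Bool) : wrd (l₁ ++ l₂) = wrd l₁ * wrd l₂ := by
  simp [wrd, List.prod_append]

lemma wrd_singleton (x : Bool) : wrd [x] = FreeAlgebra.ι ℚ x := by simp [wrd]

lemma wrd_pair : wrd [true, false] = FreeAlgebra.ι ℚ true * FreeAlgebra.ι ℚ false := by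
  simp [wrd]

lemma wrd_replicate (j : ℕ) (x : Bool) : wrd (List.replicate j x) = (FreeAlgebra.ι ℚ x) ^ j := by
  induction j with
  | zero => simp [wrd]
  | succ j ih => rw [List.replicate_succ, wrd_cons, ih, pow_succ']

def words : ℕ → Finset (List Bool)
  | 0 => {[]}
  | n+1 => ((Finset.univ : Finset Bool) ×ˢ words n).image (fun p => p.1 :: p.2)

lemma mem_words {n : ℕ} {l : List Bool} : l ∈ words n ↔ l.length = n := by
  induction n generalizing l with
  | zero => cases l <;> simp [words]
  | succ n ih =>
    cases l with
    | nil => simp [words]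
    | cons x t =>
      simp only [words, Finset.mem_image, Finset.mem_product, Finset.mem_univ, true_and,
        List.length_cons]
      constructor
      · rintro ⟨⟨y, s⟩, hs, heq⟩
        obtain ⟨rfl, rfl⟩ : y = x ∧ s = t := by
          constructor <;> [exact (List.cons.injEq _ _ _ _ ▸ heq).1;
            exact (List.cons.injEq _ _ _ _ ▸ heq).2]
        rw [ih.1 hs]
      · intro h
        exact ⟨(x, t), ih.2 (show t.length = n by omega), rfl⟩

lemma sum_words_succ {V : Type*} [AddCommMonoid V] (n : ℕ) (f : List Bool → V) :
    ∑ w ∈ words (n+1), f w = ∑ x : Bool, ∑ w ∈ words n, f (x :: w) := by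
  show ∑ w ∈ ((Finset.univ : Finset Bool) ×ˢ words n).image (fun p => p.1 :: p.2), f w = _
  rw [Finset.sum_image, Finset.sum_product]
  intro p _ q _ h
  have h1 := (List.cons.injEq _ _ _ _ ▸ h)
  exact Prod.ext h1.1 h1.2

def blocks : Finset (List Bool) := {[true], [false], [true, false]}

def secs : List (Finset (List Bool)) → Finset (List (List Bool))
  | [] => {[]}
  | s :: L => (s ×ˢ secs L).image (fun p => p.1 :: p.2)

lemma sum_secs_cons {V : Type*} [AddCommMonoid V] (s : Finset (List Bool))
    (L : List (Finset (List Bool))) (f : List (List Bool) → V) :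
    ∑ γ ∈ secs (s :: L), f γ = ∑ u ∈ s, ∑ γ ∈ secs L, f (u :: γ) := by
  show ∑ γ ∈ (s ×ˢ secs L).image (fun p => p.1 :: p.2), f γ = _
  rw [Finset.sum_image, Finset.sum_product]
  intro p _ q _ h
  have h1 := (List.cons.injEq _ _ _ _ ▸ h)
  exact Prod.ext h1.1 h1.2

lemma sum_secs_snoc {V : Type*} [AddCommMonoid V] (s : Finset (List Bool))
    (L : List (Finset (List Bool))) (f : List (List Bool) → V) :
    ∑ γ ∈ secs (L ++ [s]), f γ = ∑ γ ∈ secs L, ∑ u ∈ s, f (γ ++ [u]) := by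
  induction L generalizing f with
  | nil =>
    rw [List.nil_append, sum_secs_cons]
    show _ = ∑ γ ∈ ({[]} : Finset (List (List Bool))), ∑ u ∈ s, f (γ ++ [u])
    rw [Finset.sum_singleton]
    apply Finset.sum_congr rfl
    intro u _
    show ∑ γ ∈ ({[]} : Finset (List (List Bool))), f (u :: γ) = f ([] ++ [u])
    rw [Finset.sum_singleton]
    rfl
  | cons s' L' ih =>
    rw [List.cons_append, sum_secs_cons, sum_secs_cons]
    apply Finset.sum_congr rfl
    intro u' _
    rw [ih (fun γ => f (u' :: γ))]
    apply Finset.sum_congr rfl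
    intro γ _
    apply Finset.sum_congr rfl
    intro u _
    rw [List.cons_append]

end ZmAux

namespace ZmAux

def gA (A : Finset ℕ) : ℕ → FreeAlgebra ℚ Bool := fun k =>
  if k ∈ A then FreeAlgebra.ι ℚ true * FreeAlgebra.ι ℚ false
  else FreeAlgebra.ι ℚ true + FreeAlgebra.ι ℚ false

def PA (j : ℕ) (A : Finset ℕ) : FreeAlgebra ℚ Bool := ((List.range j).map (gA A)).prod

lemma PA_succ_notmem {j : ℕ} {A : Finset ℕ} (hA : j ∉ A) :
    PA (j+1) A = PA j A * (FreeAlgebra.ι ℚ true + FreeAlgebra.ι ℚ false) := by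
  unfold PA
  rw [List.range_succ, List.map_append, List.prod_append]
  simp [gA, hA]

lemma PA_succ_insert {j : ℕ} {A : Finset ℕ} (hA : A ⊆ Finset.range j) :
    PA (j+1) (insert j A) = PA j A * (FreeAlgebra.ι ℚ true * FreeAlgebra.ι ℚ false) := by
  unfold PA
  rw [List.range_succ, List.map_append, List.prod_append]
  congr 1
  · congr 1
    apply List.map_congr_left
    intro k hk
    have hkj : k ≠ j := by simp only [List.mem_range] at hk; omega
    simp [gA, Finset.mem_insert, hkj]
  · simp [gA]

lemma sum_blocks {V : Type*} [AddCommMonoid V] (f : List Bool → V) :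
    ∑ u ∈ blocks, f u = f [true] + (f [false] + f [true, false]) := by
  show ∑ u ∈ ({[true], [false], [true, false]} : Finset (List Bool)), f u = _
  rw [Finset.sum_insert (by decide), Finset.sum_insert (by decide), Finset.sum_singleton]

lemma step1 (j : ℕ) (p : ℕ → Prop) [DecidablePred p] :
    ∑ A ∈ (Finset.range j).powerset, (if p (j + A.card) then PA j A else 0)
      = ∑ γ ∈ secs (List.replicate j blocks),
          (if p γ.flatten.length then wrd γ.flatten else 0) := by
  induction j generalizing p with
  | zero =>
    rw [show Finset.range 0 = (∅ : Finset ℕ) from rfl, Finset.powerset_empty,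
      Finset.sum_singleton, show secs (List.replicate 0 blocks) = {[]} from rfl,
      Finset.sum_singleton]
    simp [PA, wrd]
  | succ j ih =>
    haveI d1 : DecidablePred (fun t => p (t + 1)) := fun t => inferInstanceAs (Decidable (p (t+1)))
    haveI d2 : DecidablePred (fun t => p (t + 2)) := fun t => inferInstanceAs (Decidable (p (t+2)))
    rw [Finset.range_add_one, Finset.sum_powerset_insert (by simp)]
    have hT1 : ∀ A ∈ (Finset.range j).powerset,
        (if p (j+1 + A.card) then PA (j+1) A else 0)
          = (if p ((j + A.card) + 1) then PA j A else 0)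
              * (FreeAlgebra.ι ℚ true + FreeAlgebra.ι ℚ false) := by
      intro A hA
      rw [Finset.mem_powerset] at hA
      have hjA : j ∉ A := fun h => by simpa using hA h
      rw [PA_succ_notmem hjA, show j + 1 + A.card = j + A.card + 1 from by omega,
        ite_mul, zero_mul]
      congr!
    have hT2 : ∀ A ∈ (Finset.range j).powerset,
        (if p (j+1 + (insert j A).card) then PA (j+1) (insert j A) else 0)
          = (if p ((j + A.card) + 2) then PA j A else 0)
              * (FreeAlgebra.ι ℚ true * FreeAlgebra.ι ℚ false) := by
      intro A hA
      rw [Finset.mem_powerset] at hA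
      have hjA : j ∉ A := fun h => by simpa using hA h
      rw [Finset.card_insert_of_notMem hjA, PA_succ_insert hA,
        show j + 1 + (A.card + 1) = j + A.card + 2 from by omega, ite_mul, zero_mul]
      congr!
    rw [Finset.sum_congr rfl hT1, Finset.sum_congr rfl hT2, ← Finset.sum_mul, ← Finset.sum_mul,
      ih (fun t => p (t+1)), ih (fun t => p (t+2))]
    rw [List.replicate_succ', sum_secs_snoc, Finset.sum_mul, Finset.sum_mul,
      ← Finset.sum_add_distrib]
    apply Finset.sum_congr rfl
    intro γ _
    have hexp : ∀ u : List Bool, (γ ++ [u]).flatten = γ.flatten ++ u := by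
      intro u; rw [List.flatten_append]; simp
    rw [sum_blocks]
    simp only [hexp, List.length_append, wrd_append, wrd_singleton, wrd_pair,
      List.length_singleton, List.length_cons, List.length_nil, ite_mul, zero_mul, mul_add]
    norm_num
    split_ifs <;> abel

lemma cnt_succ_cons (j : ℕ) (x : Bool) (t : List Bool) :
    cnt (j+1) (x :: t) = (if x = true ∧ t.head? = some false then cnt j t.tail else 0) + cnt j t :=
  rfl

lemma exp' (j n : ℕ) :
    ∑ γ ∈ secs (List.replicate j blocks), (if γ.flatten.length = n then wrd γ.flatten else 0)
      = ∑ w ∈ words n, cnt j w • wrd w := by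
  induction j generalizing n with
  | zero =>
    cases n with
    | zero => simp [secs, words, cnt, wrd]
    | succ n =>
      rw [show secs (List.replicate 0 blocks) = {[]} from rfl, Finset.sum_singleton,
        if_neg (by simp)]
      symm
      apply Finset.sum_eq_zero
      intro w hw
      have hne : w ≠ [] := by
        intro h; subst h; have := mem_words.1 hw; simp at this
      rw [show cnt 0 w = if w = [] then 1 else 0 from rfl, if_neg hne, zero_smul]
  | succ j ih =>
    rw [List.replicate_succ, sum_secs_cons, sum_blocks]
    cases n with
    | zero =>
      rw [Finset.sum_eq_zero (fun γ _ => if_neg (by simp [List.flatten_cons])),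
        Finset.sum_eq_zero (fun γ _ => if_neg (by simp [List.flatten_cons])),
        Finset.sum_eq_zero (fun γ _ => if_neg (by simp [List.flatten_cons]))]
      rw [show words 0 = {[]} from rfl, Finset.sum_singleton,
        show cnt (j+1) [] = 0 from rfl, zero_smul]
      simp
    | succ n' =>
      have hsingle : ∀ x : Bool, ∑ γ ∈ secs (List.replicate j blocks),
          (if (([x] : List Bool) :: γ).flatten.length = n' + 1
            then wrd (([x] : List Bool) :: γ).flatten else 0)
          = FreeAlgebra.ι ℚ x * ∑ w ∈ words n', cnt j w • wrd w := by
        intro x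
        rw [← ih n', Finset.mul_sum]
        apply Finset.sum_congr rfl
        intro γ _
        rw [List.flatten_cons, List.length_append, wrd_append, wrd_singleton, mul_ite, mul_zero]
        apply if_congr _ rfl rfl
        simp only [List.length_singleton]
        omega
      have hextra : ∑ γ ∈ secs (List.replicate j blocks),
          (if (([true, false] : List Bool) :: γ).flatten.length = n' + 1
            then wrd (([true, false] : List Bool) :: γ).flatten else 0)
          = ∑ w ∈ words n',
              (if w.head? = some false then cnt j w.tail else 0) •
                (FreeAlgebra.ι ℚ true * wrd w) := by
        cases n' with
        | zero =>
          rw [Finset.sum_eq_zero (fun γ _ => if_neg (by simp [List.flatten_cons]))]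
          rw [show words 0 = {[]} from rfl, Finset.sum_singleton]
          rw [if_neg (by simp), zero_smul]
        | succ n'' =>
          have hL : ∑ γ ∈ secs (List.replicate j blocks),
              (if (([true, false] : List Bool) :: γ).flatten.length = n'' + 1 + 1
                then wrd (([true, false] : List Bool) :: γ).flatten else 0)
              = FreeAlgebra.ι ℚ true * (FreeAlgebra.ι ℚ false
                  * ∑ w ∈ words n'', cnt j w • wrd w) := by
            rw [← ih n'', Finset.mul_sum, Finset.mul_sum]
            apply Finset.sum_congr rfl
            intro γ _
            rw [List.flatten_cons, List.length_append, wrd_append, wrd_pair, mul_assoc,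
              mul_ite, mul_zero, mul_ite, mul_zero]
            apply if_congr _ rfl rfl
            simp only [List.length_cons, List.length_nil]
            omega
          rw [hL, sum_words_succ n'', Fintype.sum_bool]
          have htrue : ∑ w ∈ words n'',
              (if (true :: w).head? = some false then cnt j (true :: w).tail else 0) •
                (FreeAlgebra.ι ℚ true * wrd (true :: w)) = 0 := by
            apply Finset.sum_eq_zero
            intro w _
            rw [if_neg (by simp), zero_smul]
          have hfalse : ∑ w ∈ words n'',
              (if (false :: w).head? = some false then cnt j (false :: w).tail else 0) •
                (FreeAlgebra.ι ℚ true * wrd (false :: w))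
              = FreeAlgebra.ι ℚ true * (FreeAlgebra.ι ℚ false
                  * ∑ w ∈ words n'', cnt j w • wrd w) := by
            rw [Finset.mul_sum, Finset.mul_sum]
            apply Finset.sum_congr rfl
            intro w _
            rw [if_pos (by simp), List.tail_cons, wrd_cons, mul_smul_comm, mul_smul_comm]
          rw [htrue, hfalse, zero_add]
      rw [hsingle true, hsingle false, hextra]
      rw [sum_words_succ n' (fun w => cnt (j+1) w • wrd w), Fintype.sum_bool]
      have hrT : ∑ w ∈ words n', cnt (j+1) (true :: w) • wrd (true :: w)
          = (∑ w ∈ words n', (if w.head? = some false then cnt j w.tail else 0) •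
              (FreeAlgebra.ι ℚ true * wrd w))
            + FreeAlgebra.ι ℚ true * ∑ w ∈ words n', cnt j w • wrd w := by
        rw [Finset.mul_sum, ← Finset.sum_add_distrib]
        apply Finset.sum_congr rfl
        intro w _
        rw [cnt_succ_cons, add_smul, wrd_cons, mul_smul_comm]
        congr 2
        simp
      have hrF : ∑ w ∈ words n', cnt (j+1) (false :: w) • wrd (false :: w)
          = FreeAlgebra.ι ℚ false * ∑ w ∈ words n', cnt j w • wrd w := by
        rw [Finset.mul_sum]
        apply Finset.sum_congr rfl
        intro w _
        rw [cnt_succ_cons, wrd_cons, mul_smul_comm]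
        congr 1
        rw [if_neg (by simp), zero_add]
      rw [hrT, hrF]
      abel

end ZmAux

namespace ZmAux

def Sp : Submodule ℚ (FreeAlgebra ℚ Bool) :=
  Submodule.span ℚ {y : FreeAlgebra ℚ Bool | ∃ p q, y = p * q - q * p}

lemma mk_wrd_swap (l₁ l₂ : List Bool) :
    Sp.mkQ (wrd (l₁ ++ l₂)) = Sp.mkQ (wrd (l₂ ++ l₁)) := by
  rw [Submodule.mkQ_apply, Submodule.mkQ_apply, Submodule.Quotient.eq]
  rw [wrd_append, wrd_append]
  exact Submodule.subset_span ⟨wrd l₁, wrd l₂, rfl⟩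

lemma mk_wrd_rotate_one (l : List Bool) :
    Sp.mkQ (wrd (l.rotate 1)) = Sp.mkQ (wrd l) := by
  cases l with
  | nil => simp
  | cons x t =>
    have h1 : (x :: t).rotate 1 = t ++ [x] := by simpa using List.rotate_cons_succ t x 0
    rw [h1, mk_wrd_swap t [x], List.singleton_append]

lemma mk_wrd_rotate (l : List Bool) (r : ℕ) :
    Sp.mkQ (wrd (l.rotate r)) = Sp.mkQ (wrd l) := by
  induction r with
  | zero => rw [List.rotate_zero]
  | succ r ihr =>
    rw [show l.rotate (r+1) = (l.rotate r).rotate 1 from (List.rotate_rotate l r 1).symm,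
      mk_wrd_rotate_one, ihr]

noncomputable def Q (w : List Bool) : FreeAlgebra ℚ Bool ⧸ Sp := Sp.mkQ (wrd w)

def Gfun (M : ℕ) (w : List Bool) : ℚ :=
  ∑ j ∈ Finset.Icc 1 M, ((-1:ℚ)^j / (j:ℚ)) * (cnt j w : ℚ)

lemma Gfun_nil (M : ℕ) : Gfun M [] = 0 := by
  apply Finset.sum_eq_zero
  intro j hj
  simp only [Finset.mem_Icc] at hj
  obtain ⟨j', rfl⟩ : ∃ j', j = j' + 1 := ⟨j - 1, by omega⟩
  rw [show cnt (j' + 1) [] = 0 from rfl]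
  simp

lemma Gfun_rotate_sum {M n : ℕ} {w : List Bool} (hw : w.length = n) (hn : 1 ≤ n)
    (hnM : n ≤ M) :
    ∑ r ∈ Finset.range n, Gfun M (w.rotate r)
      = (-1:ℚ)^n * ((if w = List.replicate n true then (1:ℚ) else 0) +
          (if w = List.replicate n false then (1:ℚ) else 0)) := by
  have hne : w ≠ [] := by intro h; subst h; simp at hw; omega
  have h := star hne (M := M) (by omega)
  rw [hw] at h
  exact h

lemma key_n (M n : ℕ) (hn1 : 1 ≤ n) (hnM : n ≤ M) :
    ∑ w ∈ words n, (Gfun M w) • Q w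
      = ((-1:ℚ)^n / (n:ℚ)) • (Q (List.replicate n true) + Q (List.replicate n false)) := by
  have hn0 : ((n:ℚ)) ≠ 0 := by simp; omega
  have hstep1 : ∀ w ∈ words n,
      (Gfun M w) • Q w = (n:ℚ)⁻¹ • ∑ r ∈ Finset.range n, Gfun M w • Q (w.rotate r) := by
    intro w hw
    have hlen := mem_words.1 hw
    have hQr : ∀ r ∈ Finset.range n, Gfun M w • Q (w.rotate r) = Gfun M w • Q w := by
      intro r _
      unfold Q
      rw [mk_wrd_rotate]
    rw [Finset.sum_congr rfl hQr, Finset.sum_const, Finset.card_range,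
      ← Nat.cast_smul_eq_nsmul ℚ n, smul_smul, inv_mul_cancel₀ hn0, one_smul]
  rw [Finset.sum_congr rfl hstep1, ← Finset.smul_sum]
  have hswap : ∑ w ∈ words n, ∑ r ∈ Finset.range n, Gfun M w • Q (w.rotate r)
      = ∑ w ∈ words n, (∑ r ∈ Finset.range n, Gfun M (w.rotate r)) • Q w := by
    rw [Finset.sum_comm]
    have hr : ∀ r ∈ Finset.range n, ∑ w ∈ words n, Gfun M w • Q (w.rotate r)
        = ∑ w ∈ words n, Gfun M (w.rotate (n - r)) • Q w := by
      intro r hrr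
      simp only [Finset.mem_range] at hrr
      apply Finset.sum_nbij' (fun w => w.rotate r) (fun w => w.rotate (n - r))
      · intro w hwm
        rw [mem_words] at hwm ⊢
        simp [hwm]
      · intro w hwm
        rw [mem_words] at hwm ⊢
        simp [hwm]
      · intro w hwm
        rw [mem_words] at hwm
        rw [List.rotate_rotate, show r + (n - r) = n from by omega, ← hwm,
          List.rotate_length]
      · intro w hwm
        rw [mem_words] at hwm
        rw [List.rotate_rotate, show n - r + r = n from by omega, ← hwm,
          List.rotate_length]
      · intro w hwm
        rw [mem_words] at hwm
        congr 1
        rw [List.rotate_rotate, show r + (n - r) = n from by omega, ← hwm,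
          List.rotate_length]
    rw [Finset.sum_congr rfl hr, Finset.sum_comm]
    apply Finset.sum_congr rfl
    intro w hwm
    rw [← Finset.sum_smul]
    congr 1
    have hlen := mem_words.1 hwm
    have e1 := Finset.sum_range_succ' (fun i => Gfun M (w.rotate i)) n
    have e2 := Finset.sum_range_succ (fun i => Gfun M (w.rotate i)) n
    have e3 : Gfun M (w.rotate n) = Gfun M (w.rotate 0) := by
      rw [List.rotate_zero, ← hlen, List.rotate_length]
    have e4 : ∀ r ∈ Finset.range n, Gfun M (w.rotate (n - r))
        = (fun i => Gfun M (w.rotate (i + 1))) (n - 1 - r) := by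
      intro r hrr
      simp only [Finset.mem_range] at hrr
      simp only []
      congr 2
      omega
    rw [Finset.sum_congr rfl e4, Finset.sum_range_reflect (fun i => Gfun M (w.rotate (i + 1))) n]
    linarith [e1, e2, e3]
  rw [hswap]
  have hfin : ∀ w ∈ words n, (∑ r ∈ Finset.range n, Gfun M (w.rotate r)) • Q w
      = (if w = List.replicate n true then (-1:ℚ)^n • Q w else 0)
        + (if w = List.replicate n false then (-1:ℚ)^n • Q w else 0) := by
    intro w hwm
    rw [Gfun_rotate_sum (mem_words.1 hwm) hn1 hnM, mul_add, add_smul]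
    congr 1 <;> (rw [mul_ite, mul_one, mul_zero, ite_smul, zero_smul])
  rw [Finset.sum_congr rfl hfin, Finset.sum_add_distrib,
    Finset.sum_ite_eq' (words n) (List.replicate n true) (fun w => (-1:ℚ)^n • Q w),
    Finset.sum_ite_eq' (words n) (List.replicate n false) (fun w => (-1:ℚ)^n • Q w),
    if_pos (mem_words.2 List.length_replicate),
    if_pos (mem_words.2 List.length_replicate),
    smul_add, smul_smul, smul_smul]
  rw [show (n:ℚ)⁻¹ * (-1:ℚ)^n = (-1:ℚ)^n / (n:ℚ) from by ring, smul_add]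

end ZmAux

open ZmAux in


/-- In ℚ⟨a,b⟩, for every m ≥ 1 the element
Z_m(a,b) = ∑_{j=1}^{m−1} ((−1)^j/j)·[ ∑_{𝒜 ⊆ {1,…,j}, j+|𝒜| < m} y_{𝒜,j}(a,b)
− a^j − b^j ] lies in the commutator subspace of ℚ⟨a,b⟩. -/
theorem Zm_mem_commutatorSubspace (m : ℕ) (hm : 1 ≤ m)
    (a b : FreeAlgebra ℚ Bool) (ha : a = FreeAlgebra.ι ℚ true)
    (hb : b = FreeAlgebra.ι ℚ false) :
    (∑ j ∈ Finset.Icc 1 (m - 1), ((-1 : ℚ) ^ j / (j : ℚ)) •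
        ((∑ 𝒜 ∈ (Finset.range j).powerset.filter (fun 𝒜 => j + 𝒜.card < m),
            ((List.range j).map (fun k => if k ∈ 𝒜 then a * b else a + b)).prod)
          - a ^ j - b ^ j)) ∈
      Submodule.span ℚ
        {y : FreeAlgebra ℚ Bool | ∃ p q, y = p * q - q * p} := by
  subst ha hb
  obtain ⟨M, rfl⟩ : ∃ M, m = M + 1 := ⟨m - 1, by omega⟩
  show _ ∈ Sp
  rw [← Submodule.Quotient.mk_eq_zero Sp, ← Submodule.mkQ_apply]
  simp only [Nat.add_sub_cancel]
  rw [map_sum]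
  have hSj : ∀ j : ℕ,
      (∑ 𝒜 ∈ (Finset.range j).powerset.filter (fun 𝒜 => j + 𝒜.card < M + 1),
        ((List.range j).map (fun k => if k ∈ 𝒜 then FreeAlgebra.ι ℚ true * FreeAlgebra.ι ℚ false
          else FreeAlgebra.ι ℚ true + FreeAlgebra.ι ℚ false)).prod)
      = ∑ n ∈ Finset.range (M+1), ∑ w ∈ words n, cnt j w • wrd w := by
    intro j
    refine (Finset.sum_filter _ _).trans ?_
    refine Eq.trans (step1 j (fun t => t < M + 1)) ?_
    refine Eq.trans ?_ (Finset.sum_congr rfl fun n _ => exp' j n)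
    refine Eq.trans ?_ Finset.sum_comm
    refine Finset.sum_congr rfl fun γ _ => ?_
    rw [Finset.sum_ite_eq (Finset.range (M+1)) γ.flatten.length (fun _ => wrd γ.flatten)]
    simp [Finset.mem_range]
  have hterm : ∀ j ∈ Finset.Icc 1 M,
      Sp.mkQ (((-1:ℚ)^j / (j:ℚ)) •
        ((∑ 𝒜 ∈ (Finset.range j).powerset.filter (fun 𝒜 => j + 𝒜.card < M + 1),
          ((List.range j).map (fun k => if k ∈ 𝒜 then FreeAlgebra.ι ℚ true * FreeAlgebra.ι ℚ false
            else FreeAlgebra.ι ℚ true + FreeAlgebra.ι ℚ false)).prod)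
          - FreeAlgebra.ι ℚ true ^ j - FreeAlgebra.ι ℚ false ^ j))
        = ((-1:ℚ)^j / (j:ℚ)) • ((∑ n ∈ Finset.range (M+1), ∑ w ∈ words n, cnt j w • Q w)
            - (Q (List.replicate j true) + Q (List.replicate j false))) := by
    intro j _
    rw [hSj j, ← wrd_replicate j true, ← wrd_replicate j false]
    rw [map_smul, map_sub, map_sub, sub_sub]
    congr 1
    simp only [map_sum, map_nsmul]
    rfl
  rw [Finset.sum_congr rfl hterm,
    Finset.sum_congr rfl (fun (j : ℕ) _ => smul_sub ((-1:ℚ)^j / (j:ℚ)) _ _),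
    Finset.sum_sub_distrib, sub_eq_zero]
  have hT1 : ∀ j ∈ Finset.Icc 1 M,
      ((-1:ℚ)^j / (j:ℚ)) • (∑ n ∈ Finset.range (M+1), ∑ w ∈ words n, cnt j w • Q w)
        = ∑ n ∈ Finset.range (M+1), ∑ w ∈ words n,
            (((-1:ℚ)^j / (j:ℚ)) * (cnt j w : ℚ)) • Q w := by
    intro j _
    rw [Finset.smul_sum]
    refine Finset.sum_congr rfl fun n _ => ?_
    rw [Finset.smul_sum]
    refine Finset.sum_congr rfl fun w _ => ?_
    rw [← Nat.cast_smul_eq_nsmul ℚ (cnt j w), smul_smul]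
  rw [Finset.sum_congr rfl hT1, Finset.sum_comm]
  have hT2 : ∀ n ∈ Finset.range (M+1),
      ∑ j ∈ Finset.Icc 1 M, ∑ w ∈ words n,
          (((-1:ℚ)^j / (j:ℚ)) * (cnt j w:ℚ)) • Q w
        = ∑ w ∈ words n, Gfun M w • Q w := by
    intro n _
    rw [Finset.sum_comm]
    refine Finset.sum_congr rfl fun w _ => ?_
    rw [← Finset.sum_smul]
    rfl
  rw [Finset.sum_congr rfl hT2,
    show Finset.range (M+1) = insert 0 (Finset.Icc 1 M) from by ext i; simp; omega,
    Finset.sum_insert (by simp),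
    show (∑ w ∈ words 0, Gfun M w • Q w) = 0 from by
      rw [show words 0 = {[]} from rfl, Finset.sum_singleton, Gfun_nil, zero_smul],
    zero_add]
  refine Finset.sum_congr rfl fun n hn => ?_
  simp only [Finset.mem_Icc] at hn
  exact key_n M n hn.1 hn.2
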